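/- Let D ∈ Mₖ(ℂ) be hermitian, let 0 < s < 1, and let κ ∈ ℝ. Then the generalized spectral localizer L_κ(D, 1, s) ∈ M_{4k}(ℂ) (taking x equal to the identity matrix) is an invertible hermitian matrix that has exactly 2k positive eigenvalues and exactly 2k negative eigenvalues (counted with multiplicity); in particular its signature is zero. -/

import Mathlib

open Matrix Polynomial

section helpers
variable {n : Type*} [Fintype n] [DecidableEq n] {R : Type*} [CommRing R]

private lemma my_charpoly_conj (M V W : Matrix n n R) (hVW : V * W = 1) (hWV : W * V = 1) :
    (V * M * W).charpoly = M.charpoly := by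
  have hmul : ∀ P Q : Matrix n n R, (C : R →+* R[X]).mapMatrix (P * Q)
      = (C : R →+* R[X]).mapMatrix P * (C : R →+* R[X]).mapMatrix Q :=
    fun P Q => _root_.map_mul (C : R →+* R[X]).mapMatrix P Q
  have hone : (C : R →+* R[X]).mapMatrix (1 : Matrix n n R) = 1 :=
    _root_.map_one (C : R →+* R[X]).mapMatrix
  unfold Matrix.charpoly
  have hc : charmatrix (V * M * W) =
      (C : R →+* R[X]).mapMatrix V * charmatrix M * (C : R →+* R[X]).mapMatrix W := by
    unfold charmatrix
    simp only [mul_sub, sub_mul, hmul]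
    congr 1
    have h1 : (C : R →+* R[X]).mapMatrix V * Matrix.scalar n (X : R[X]) =
        Matrix.scalar n (X : R[X]) * (C : R →+* R[X]).mapMatrix V := by
      rw [scalar_commute] ; intro r ; exact (Commute.all _ _)
    rw [h1, mul_assoc, ← hmul, hVW, hone, mul_one]
  have hdet : ((C : R →+* R[X]).mapMatrix W).det * ((C : R →+* R[X]).mapMatrix V).det = 1 := by
    rw [← det_mul, ← hmul, hWV, hone, det_one]
  rw [hc, det_mul, det_mul, mul_comm, ← mul_assoc, hdet, one_mul]

private lemma my_charpoly_diagonal (d : n → R) :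
    (diagonal d).charpoly = ∏ i, (X - C (d i)) := by
  unfold Matrix.charpoly
  have : charmatrix (diagonal d) = diagonal fun i => X - C (d i) := by
    ext i j
    by_cases h : i = j
    · subst h; simp [charmatrix_apply_eq]
    · simp [charmatrix_apply_ne _ _ _ h, diagonal_apply_ne _ h, diagonal_apply_ne' _ h]
  rw [this, det_diagonal]
end helpers

private lemma eig_multiset_symm {n : Type*} [Fintype n] [DecidableEq n]
    {N : Matrix n n ℂ} (hN : N.IsHermitian) (V : Matrix n n ℂ)
    (hV1 : V * Vᴴ = 1) (hV2 : Vᴴ * V = 1) (hVN : V * N * Vᴴ = -N) :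
    (Finset.univ.val.map hN.eigenvalues) =
      (Finset.univ.val.map hN.eigenvalues).map (fun x => -x) := by
  classical
  set U : Matrix n n ℂ := (hN.eigenvectorUnitary : Matrix n n ℂ) with hU
  have hU1 : U * star U = 1 := Matrix.mem_unitaryGroup_iff.mp hN.eigenvectorUnitary.2
  have hU2 : star U * U = 1 := Matrix.mem_unitaryGroup_iff'.mp hN.eigenvectorUnitary.2
  have p1 : N.charpoly = ∏ i, (X - C ((hN.eigenvalues i : ℝ) : ℂ)) := by
    conv_lhs => rw [hN.spectral_theorem]
    rw [Unitary.conjStarAlgAut_apply, ← hU, my_charpoly_conj _ U (star U) hU1 hU2, my_charpoly_diagonal]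
    rfl
  have hneg : -N = U * diagonal (fun i => ((-(hN.eigenvalues i) : ℝ) : ℂ)) * star U := by
    conv_lhs => rw [hN.spectral_theorem, Unitary.conjStarAlgAut_apply, ← hU]
    have hdg : diagonal (fun i => ((-(hN.eigenvalues i) : ℝ) : ℂ)) =
        -diagonal (RCLike.ofReal ∘ hN.eigenvalues) := by
      have hf : (fun i => ((-(hN.eigenvalues i) : ℝ) : ℂ))
          = fun i => -((RCLike.ofReal ∘ hN.eigenvalues) i) := by
        funext i; simp [Function.comp]
      rw [hf, diagonal_neg]
    rw [hdg, Matrix.mul_neg, Matrix.neg_mul]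
  have p2 : N.charpoly = ∏ i, (X - C ((-(hN.eigenvalues i) : ℝ) : ℂ)) := by
    calc N.charpoly = (V * N * Vᴴ).charpoly := (my_charpoly_conj N V Vᴴ hV1 hV2).symm
    _ = (-N).charpoly := by rw [hVN]
    _ = _ := by rw [hneg, my_charpoly_conj _ U (star U) hU1 hU2, my_charpoly_diagonal]
  have key := congrArg Polynomial.roots (p1.symm.trans p2)
  rw [Finset.prod_eq_multiset_prod, Finset.prod_eq_multiset_prod] at key
  rw [show (Multiset.map (fun i => X - C ((hN.eigenvalues i : ℝ) : ℂ)) Finset.univ.val)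
      = Multiset.map (fun a => X - C a)
        (Multiset.map (fun i => ((hN.eigenvalues i : ℝ) : ℂ)) Finset.univ.val) by
    rw [Multiset.map_map]; rfl] at key
  rw [show (Multiset.map (fun i => X - C ((-(hN.eigenvalues i) : ℝ) : ℂ)) Finset.univ.val)
      = Multiset.map (fun a => X - C a)
        (Multiset.map (fun i => ((-(hN.eigenvalues i) : ℝ) : ℂ)) Finset.univ.val) by
    rw [Multiset.map_map]; rfl] at key
  rw [Polynomial.roots_multiset_prod_X_sub_C, Polynomial.roots_multiset_prod_X_sub_C] at key
  have key2 : Multiset.map (Complex.ofReal ∘ hN.eigenvalues) Finset.univ.val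
      = Multiset.map (Complex.ofReal ∘ (fun i => -(hN.eigenvalues i))) Finset.univ.val := key
  rw [← Multiset.map_map, ← Multiset.map_map] at key2
  have key3 := Multiset.map_injective Complex.ofReal_injective key2
  rw [Multiset.map_map]
  exact key3

section posdefhelper
open ComplexOrder

private lemma posDef_conjTranspose_mul_self_of_leftInv {n : Type*} [Fintype n] [DecidableEq n]
    (A E : Matrix n n ℂ) (hEA : E * A = 1) : (Aᴴ * A).PosDef := by
  refine Matrix.PosDef.of_dotProduct_mulVec_pos (isHermitian_conjTranspose_mul_self A) fun x hx => ?_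
  have hax : A *ᵥ x ≠ 0 := by
    intro h
    apply hx
    have : E *ᵥ (A *ᵥ x) = x := by rw [mulVec_mulVec, hEA, one_mulVec]
    rw [h, mulVec_zero] at this
    exact this.symm
  have hrw : star x ⬝ᵥ ((Aᴴ * A) *ᵥ x) = star (A *ᵥ x) ⬝ᵥ (A *ᵥ x) := by
    rw [← mulVec_mulVec, dotProduct_mulVec, star_mulVec]
  rw [hrw]
  exact dotProduct_star_self_pos_iff.mpr hax

private lemma isUnit_conjTranspose_mul_self_add {n : Type*} [Fintype n] [DecidableEq n]
    (A E B : Matrix n n ℂ) (hEA : E * A = 1) : IsUnit (Aᴴ * A + Bᴴ * B) :=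
  ((posDef_conjTranspose_mul_self_of_leftInv A E hEA).add_posSemidef
    (posSemidef_conjTranspose_mul_self B)).isUnit

end posdefhelper



open Matrix

/-- The generalized spectral localizer `L_κ(D,x,s)`: the hermitian `4k × 4k` complex
matrix with `k × k` blocks
`[[s·1, x, κD, 0], [x*, s·1, 0, κD], [κD, 0, -s·1, -x], [0, κD, -x*, -s·1]]`. -/
noncomputable def localizer {k : ℕ} (D x : Matrix (Fin k) (Fin k) ℂ) (κ s : ℝ) :
    Matrix ((Fin k ⊕ Fin k) ⊕ (Fin k ⊕ Fin k)) ((Fin k ⊕ Fin k) ⊕ (Fin k ⊕ Fin k)) ℂ :=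
  Matrix.fromBlocks
    (Matrix.fromBlocks ((s : ℂ) • 1) x xᴴ ((s : ℂ) • 1))
    (Matrix.fromBlocks ((κ : ℂ) • D) 0 0 ((κ : ℂ) • D))
    (Matrix.fromBlocks ((κ : ℂ) • D) 0 0 ((κ : ℂ) • D))
    (Matrix.fromBlocks (-(s : ℂ) • 1) (-x) (-xᴴ) (-(s : ℂ) • 1))

/-- For hermitian `D`, `0 < s < 1` and any `κ`, the localizer `L_κ(D,1,s)` is an
invertible hermitian matrix with exactly `2k` positive and `2k` negative eigenvalues
(with multiplicity); in particular its signature vanishes. -/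
theorem localizer_identity_signature_zero {k : ℕ} (D : Matrix (Fin k) (Fin k) ℂ)
    (hD : D.IsHermitian) (s : ℝ) (hs0 : 0 < s) (hs1 : s < 1) (κ : ℝ) :
    ∃ hL : (localizer D (1 : Matrix (Fin k) (Fin k) ℂ) κ s).IsHermitian,
      IsUnit (localizer D (1 : Matrix (Fin k) (Fin k) ℂ) κ s) ∧
      (Finset.univ.filter fun i => 0 < hL.eigenvalues i).card = 2 * k ∧
      (Finset.univ.filter fun i => hL.eigenvalues i < 0).card = 2 * k := by
  classical
  set A : Matrix (Fin k ⊕ Fin k) (Fin k ⊕ Fin k) ℂ :=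
    fromBlocks ((s : ℂ) • 1) 1 1 ((s : ℂ) • 1) with hA
  set B : Matrix (Fin k ⊕ Fin k) (Fin k ⊕ Fin k) ℂ :=
    fromBlocks ((κ : ℂ) • D) 0 0 ((κ : ℂ) • D) with hB
  set L := localizer D (1 : Matrix (Fin k) (Fin k) ℂ) κ s with hLset
  have hnegA : Matrix.fromBlocks (-(s : ℂ) • 1) (-(1 : Matrix (Fin k) (Fin k) ℂ)) (-1)
      (-(s : ℂ) • 1) = -A := by
    rw [hA, Matrix.fromBlocks_neg]
    simp only [neg_smul]
  have hLdef : L = fromBlocks A B B (-A) := by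
    rw [hLset]
    unfold localizer
    rw [conjTranspose_one, hnegA, ← hA, ← hB]
  have hAH : Aᴴ = A := by
    simp [hA, fromBlocks_conjTranspose, conjTranspose_smul, Complex.star_def, Complex.conj_ofReal]
  have hBH : Bᴴ = B := by
    simp [hB, fromBlocks_conjTranspose, conjTranspose_smul, Complex.star_def, Complex.conj_ofReal,
      hD.eq]
  have hLH : L.IsHermitian := by
    rw [hLdef]
    show (fromBlocks A B B (-A))ᴴ = _
    rw [fromBlocks_conjTranspose, conjTranspose_neg, hAH, hBH]
  have hAB : A * B = B * A := by
    simp only [hA, hB, fromBlocks_multiply, Matrix.smul_mul, Matrix.mul_smul, Matrix.one_mul,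
      Matrix.mul_one, Matrix.zero_mul, Matrix.mul_zero, add_zero, zero_add, smul_smul,
      smul_zero, mul_comm]
  -- explicit inverse of A
  have hden : s ^ 2 - 1 ≠ 0 := by nlinarith
  set a : ℝ := s / (s ^ 2 - 1) with ha
  set b : ℝ := -1 / (s ^ 2 - 1) with hb
  set E : Matrix (Fin k ⊕ Fin k) (Fin k ⊕ Fin k) ℂ :=
    fromBlocks ((a : ℂ) • 1) ((b : ℂ) • 1) ((b : ℂ) • 1) ((a : ℂ) • 1) with hE
  have hr1 : s * a + b = 1 := by
    rw [ha, hb]; first | (field_simp; ring) | field_simp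
  have hr2 : s * b + a = 0 := by
    rw [ha, hb]; first | (field_simp; ring) | field_simp
  have h1 : ((s : ℂ) * a) + b = 1 := by exact_mod_cast congrArg Complex.ofReal hr1
  have h2 : ((s : ℂ) * b) + a = 0 := by exact_mod_cast congrArg Complex.ofReal hr2
  have h1' : ((b : ℂ)) + (s : ℂ) * a = 1 := by rw [add_comm]; exact h1
  have h2' : ((a : ℂ)) + (s : ℂ) * b = 0 := by rw [add_comm]; exact h2
  have hcomb : ∀ u v : ℂ, u • (1 : Matrix (Fin k) (Fin k) ℂ) + v • 1
      = (u + v) • 1 := fun u v => (add_smul u v 1).symm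
  have hEA : E * A = 1 := by
    rw [hE, hA, fromBlocks_multiply, ← fromBlocks_one]
    simp only [smul_mul_smul_comm, Matrix.one_mul, Matrix.mul_one, mul_one, hcomb,
      mul_comm ((a : ℂ)) ((s : ℂ)), mul_comm ((b : ℂ)) ((s : ℂ)),
      h1, h2, h1', h2', one_smul, zero_smul]
  -- invertibility of A*A + B*B
  have hMpd : IsUnit (A * A + B * B) := by
    have := isUnit_conjTranspose_mul_self_add A E B hEA
    rwa [hAH, hBH] at this
  -- L * L
  have hLL : L * L = fromBlocks (A * A + B * B) 0 0 (A * A + B * B) := by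
    have e12 : A * B + B * (-A) = 0 := by rw [Matrix.mul_neg, hAB, add_neg_cancel]
    have e21 : B * A + (-A) * B = 0 := by rw [Matrix.neg_mul, hAB, add_neg_cancel]
    have e22 : B * B + (-A) * (-A) = A * A + B * B := by
      rw [Matrix.neg_mul, Matrix.mul_neg, neg_neg, add_comm]
    rw [hLdef, fromBlocks_multiply, e12, e21, e22]
  -- invertibility of L
  have hLunit : IsUnit L := by
    rw [Matrix.isUnit_iff_isUnit_det]
    have hdet2 : L.det * L.det = (A * A + B * B).det * (A * A + B * B).det := by
      rw [← det_mul, hLL, det_fromBlocks_zero₁₂]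
    have hMunit : IsUnit (A * A + B * B).det := (Matrix.isUnit_iff_isUnit_det _).mp hMpd
    have : IsUnit (L.det * L.det) := by rw [hdet2]; exact hMunit.mul hMunit
    exact isUnit_of_mul_isUnit_left this
  -- the symmetry V
  set V : Matrix ((Fin k ⊕ Fin k) ⊕ (Fin k ⊕ Fin k)) ((Fin k ⊕ Fin k) ⊕ (Fin k ⊕ Fin k)) ℂ :=
    fromBlocks 0 1 (-1) 0 with hV
  have hVH : Vᴴ = fromBlocks 0 (-1) 1 0 := by
    simp [hV, fromBlocks_conjTranspose]
  have hV1 : V * Vᴴ = 1 := by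
    rw [hV, hVH, fromBlocks_multiply, ← fromBlocks_one]
    simp
  have hV2 : Vᴴ * V = 1 := by
    rw [hV, hVH, fromBlocks_multiply, ← fromBlocks_one]
    simp
  have hnegFB : -(fromBlocks A B B (-A)) = fromBlocks (-A) (-B) (-B) A := by
    rw [Matrix.fromBlocks_neg, neg_neg]
  have hVL : V * L * Vᴴ = -L := by
    rw [hLdef, hnegFB, hV, hVH, fromBlocks_multiply, fromBlocks_multiply]
    simp only [Matrix.zero_mul, Matrix.mul_zero, Matrix.one_mul, Matrix.mul_one,
      Matrix.neg_mul, Matrix.mul_neg, zero_add, add_zero, neg_zero, neg_neg]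
  -- eigenvalue multiset
  set lam := hLH.eigenvalues with hlam
  set m : Multiset ℝ := Finset.univ.val.map lam with hm
  have hsym : m = m.map (fun x => -x) := eig_multiset_symm hLH V hV1 hV2 hVL
  have hdetne : L.det ≠ 0 := ((Matrix.isUnit_iff_isUnit_det _).mp hLunit).ne_zero
  have hnz : ∀ i, lam i ≠ 0 := by
    intro i hi
    apply hdetne
    rw [hLH.det_eq_prod_eigenvalues]
    refine Finset.prod_eq_zero (Finset.mem_univ i) ?_
    rw [← hlam, hi]
    simp
  have hcard : Multiset.card m = (k + k) + (k + k) := by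
    rw [hm, Multiset.card_map]
    simp [Finset.card_univ]
  have hposcount : (Finset.univ.filter fun i => 0 < lam i).card
      = Multiset.countP (fun x => 0 < x) m := by
    rw [hm, Multiset.countP_map]
    rfl
  have hnegcount : (Finset.univ.filter fun i => lam i < 0).card
      = Multiset.countP (fun x => x < 0) m := by
    rw [hm, Multiset.countP_map]
    rfl
  have hpn : Multiset.countP (fun x => 0 < x) m = Multiset.countP (fun x => x < 0) m := by
    conv_lhs => rw [hsym]
    rw [Multiset.countP_map, Multiset.countP_eq_card_filter]
    congr 1
    refine Multiset.filter_congr (fun x _ => ?_)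
    simp [neg_pos]
  have hsplit : Multiset.countP (fun x => 0 < x) m
      + Multiset.countP (fun x => ¬ 0 < x) m = (k + k) + (k + k) := by
    rw [← Multiset.card_eq_countP_add_countP, hcard]
  have hnotpos : Multiset.countP (fun x => ¬ 0 < x) m = Multiset.countP (fun x => x < 0) m := by
    refine Multiset.countP_congr rfl (fun x hx => ?_)
    obtain ⟨i, _, rfl⟩ := Multiset.mem_map.mp hx
    have hne := hnz i
    refine propext ?_
    constructor <;> intro h
    · exact lt_of_le_of_ne (not_lt.mp h) hne
    · exact not_lt.mpr h.le
  refine ⟨hLH, hLunit, ?_, ?_⟩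
  · rw [hposcount]; omega
  · rw [hnegcount]; omega
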